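/- Let C be a label-pure partition of Fin n into nonempty clusters, and let (w, b, ξ) with ξ : Fin n → ℝ satisfy y i * (⟪w, x i⟫ + b) ≥ 1 − ξ i and ξ i ≥ 0 for all i (feasibility for the original SVM). Define ξ̂_k = (Σ_{i∈C_k} ξ i)/|C_k| for each cluster. Then (w, b, ξ̂) is feasible for the aggregated SVM: ŷ_k * (⟪w, x̄_k⟫ + b) ≥ 1 − ξ̂_k and ξ̂_k ≥ 0 for every k, and moreover Σ_k |C_k| * ξ̂_k = Σ_{i<n} ξ i, so the weighted aggregated slack cost equals the original slack cost. -/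

import Mathlib

open Finset
open scoped RealInnerProductSpace

noncomputable section

/-- The cluster of index `k` for the cluster-assignment map `c`. -/
def cluster {n K : ℕ} (c : Fin n → Fin K) (k : Fin K) : Finset (Fin n) :=
  Finset.univ.filter fun i => c i = k

/-- Centroid of the cluster of index `k`. -/
def centroid {n m K : ℕ} (x : Fin n → EuclideanSpace ℝ (Fin m))
    (c : Fin n → Fin K) (k : Fin K) : EuclideanSpace ℝ (Fin m) :=
  ((cluster c k).card : ℝ)⁻¹ • ∑ i ∈ cluster c k, x i

/-- Averaging the slacks of a feasible solution of the original SVM over each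
cluster of a label-pure partition yields a feasible solution of the aggregated
SVM with the same total (weighted) slack cost. -/
theorem svm_slack_aggregation (n m K : ℕ)
    (x : Fin n → EuclideanSpace ℝ (Fin m)) (y : Fin n → ℝ)
    (hy : ∀ i, y i = 1 ∨ y i = -1)
    (c : Fin n → Fin K) (hsurj : Function.Surjective c)
    (yhat : Fin K → ℝ) (hpure : ∀ i, yhat (c i) = y i)
    (w : EuclideanSpace ℝ (Fin m)) (b : ℝ) (ξ : Fin n → ℝ)
    (hfeas : ∀ i, 1 - ξ i ≤ y i * (⟪w, x i⟫ + b) ∧ 0 ≤ ξ i)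
    (ξhat : Fin K → ℝ)
    (hξhat : ∀ k, ξhat k = (∑ i ∈ cluster c k, ξ i) / ((cluster c k).card : ℝ)) :
    (∀ k, 1 - ξhat k ≤ yhat k * (⟪w, centroid x c k⟫ + b) ∧ 0 ≤ ξhat k) ∧
      ∑ k, ((cluster c k).card : ℝ) * ξhat k = ∑ i, ξ i := by
  have hcard : ∀ k : Fin K, 0 < ((cluster c k).card : ℝ) := by
    intro k
    obtain ⟨i, hi⟩ := hsurj k
    have : i ∈ cluster c k := by simp [cluster, hi]
    exact_mod_cast Finset.card_pos.mpr ⟨i, this⟩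
  constructor
  · intro k
    set N : ℝ := ((cluster c k).card : ℝ)
    have hN := hcard k
    have hsum : ∑ i ∈ cluster c k, (1 - ξ i) ≤
        yhat k * (⟪w, ∑ i ∈ cluster c k, x i⟫ + N * b) := by
      have h1 : ∑ i ∈ cluster c k, (1 - ξ i) ≤
          ∑ i ∈ cluster c k, y i * (⟪w, x i⟫ + b) :=
        Finset.sum_le_sum fun i _ => (hfeas i).1
      have h2 : ∑ i ∈ cluster c k, y i * (⟪w, x i⟫ + b) =
          yhat k * (⟪w, ∑ i ∈ cluster c k, x i⟫ + N * b) := by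
        have h3 : ∑ i ∈ cluster c k, y i * (⟪w, x i⟫ + b) =
            ∑ i ∈ cluster c k, yhat k * (⟪w, x i⟫ + b) := by
          refine Finset.sum_congr rfl fun i hi => ?_
          have hci : c i = k := by simpa [cluster] using hi
          rw [← hci, hpure i]
        rw [h3, ← Finset.mul_sum, Finset.sum_add_distrib, ← inner_sum,
          Finset.sum_const, nsmul_eq_mul]
      linarith [h1, h2.symm.le]
    have hsum' : ∑ i ∈ cluster c k, (1 - ξ i) = N - ∑ i ∈ cluster c k, ξ i := by
      rw [Finset.sum_sub_distrib]; simp [N]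
    have hxi : ξhat k = (∑ i ∈ cluster c k, ξ i) / N := hξhat k
    constructor
    · have hinner : ⟪w, centroid x c k⟫ = N⁻¹ * ⟪w, ∑ i ∈ cluster c k, x i⟫ := by
        rw [show _root_.centroid x c k = (N⁻¹ : ℝ) • ∑ i ∈ cluster c k, x i from rfl,
          real_inner_smul_right]
      rw [hinner, hxi]
      rw [hsum'] at hsum
      set S : ℝ := ∑ i ∈ cluster c k, ξ i
      set T : ℝ := ⟪w, ∑ i ∈ cluster c k, x i⟫
      rw [← mul_le_mul_iff_of_pos_right hN]
      have e1 : (1 - S / N) * N = N - S := by rw [sub_mul, div_mul_cancel₀ _ hN.ne', one_mul]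
      have e2 : yhat k * (N⁻¹ * T + b) * N = yhat k * (T + N * b) :=
        calc yhat k * (N⁻¹ * T + b) * N = yhat k * (N⁻¹ * T * N + b * N) := by ring
          _ = yhat k * (T + N * b) := by
              rw [mul_comm N⁻¹ T, inv_mul_cancel_right₀ hN.ne', mul_comm b N]
      rw [e1, e2]; exact hsum
    · rw [hxi]
      exact div_nonneg (Finset.sum_nonneg fun i _ => (hfeas i).2) hN.le
  · have : ∀ k, ((cluster c k).card : ℝ) * ξhat k = ∑ i ∈ cluster c k, ξ i := by
      intro k
      rw [hξhat k, mul_div_cancel₀ _ (hcard k).ne']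
    rw [Finset.sum_congr rfl fun k _ => this k]
    rw [← Finset.sum_fiberwise (g := c) (f := ξ)]
    rfl

end
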